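/- Let f : (0,∞) → (0,∞) with f(0⁺) := lim_{t→0⁺} f(t) existing. For D = Diag(λ_1,…,λ_n) with λ_1 the largest eigenvalue, and lifted horizontal tangent vectors Ā, B̄ with entries (λ_1 − λ_i)u_i, (λ_1 − λ_i)v_i in the first row/column, the metric value g_D(Ā,B̄) = 2 Re Σ_{i=2}^n ((λ_1−λ_i)²/(f(λ_i/λ_1)λ_1)) u_i v̄_i converges, as λ_1 → 1 and λ_i → 0 for i ≥ 2, to (2/f(0⁺)) Re Σ_{i=2}^n u_i v̄_i if f(0⁺) ≠ 0, and diverges (for some nonzero u = v) if f(0⁺) = 0. -/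

import Mathlib

open Filter Finset

/-- The lifted-metric value `g_D(Ā, B̄) = 2 Re ∑_{i≥2} ((λ₁−λᵢ)²/(f(λᵢ/λ₁)λ₁)) uᵢ v̄ᵢ`
for eigenvalues `λ` (index `0` being the largest) and horizontal data `u`, `v`. -/
noncomputable def liftedMetric (n : ℕ) (f : ℝ → ℝ) (l : Fin (n + 2) → ℝ)
    (u v : Fin (n + 2) → ℂ) : ℝ :=
  2 * (∑ i ∈ Finset.univ.filter (fun i : Fin (n + 2) => i ≠ 0),
        (((l 0 - l i) ^ 2 / (f (l i / l 0) * l 0) : ℝ) : ℂ) *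
          (u i * (starRingEnd ℂ) (v i))).re

/-- Along a sequence of eigenvalue tuples with `λ₁ → 1` (so `λᵢ → 0` for
`i ≥ 2`), the lifted metric converges to `(2/f(0⁺)) Re ∑ uᵢ v̄ᵢ` (a multiple of the
Fubini–Study metric) iff `f(0⁺) ≠ 0`; if `f(0⁺) = 0` it diverges for some `u = v ≠ 0`. -/
theorem stmt18 (n : ℕ) (f : ℝ → ℝ) (hfpos : ∀ t > 0, 0 < f t)
    (L : ℝ) (hL : Tendsto f (nhdsWithin 0 (Set.Ioi 0)) (nhds L))
    (l : ℕ → Fin (n + 2) → ℝ)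
    (hpos : ∀ m i, 0 < l m i) (hsum : ∀ m, ∑ i, l m i = 1)
    (hmax : ∀ m, ∀ i : Fin (n + 2), i ≠ 0 → l m i < l m 0)
    (htop : Tendsto (fun m => l m 0) atTop (nhds 1)) :
    (L ≠ 0 → ∀ u v : Fin (n + 2) → ℂ,
      Tendsto (fun m => liftedMetric n f (l m) u v) atTop
        (nhds ((2 / L) * (∑ i ∈ Finset.univ.filter (fun i : Fin (n + 2) => i ≠ 0),
            u i * (starRingEnd ℂ) (v i)).re))) ∧
    (L = 0 → ∃ u : Fin (n + 2) → ℂ, u ≠ 0 ∧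
      Tendsto (fun m => liftedMetric n f (l m) u u) atTop atTop) := by

  classical
  set F := Finset.univ.filter (fun i : Fin (n + 2) => i ≠ 0) with hF
  have hl0pos : ∀ m, 0 < l m 0 := fun m => hpos m 0
  have hsum' : ∀ m, ∑ i ∈ F, l m i = 1 - l m 0 := by
    intro m
    have h : l m 0 + ∑ i ∈ F, l m i = 1 := by
      rw [hF, Finset.filter_ne', Finset.add_sum_erase _ _ (Finset.mem_univ 0)]
      exact hsum m
    linarith
  have hli : ∀ i ∈ F, Tendsto (fun m => l m i) atTop (nhds 0) := by
    intro i hi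
    apply squeeze_zero (fun m => (hpos m i).le) (g := fun m => 1 - l m 0)
    · intro m
      rw [← hsum' m]
      exact Finset.single_le_sum (fun j _ => (hpos m j).le) hi
    · have := htop.const_sub 1
      simpa using this
  have hr : ∀ i ∈ F, Tendsto (fun m => l m i / l m 0) atTop (nhdsWithin 0 (Set.Ioi 0)) := by
    intro i hi
    apply tendsto_nhdsWithin_of_tendsto_nhds_of_eventually_within
    · have := (hli i hi).div htop one_ne_zero
      rw [zero_div] at this
      exact this
    · exact Eventually.of_forall fun m => div_pos (hpos m i) (hl0pos m)
  have hfr : ∀ i ∈ F, Tendsto (fun m => f (l m i / l m 0)) atTop (nhds L) :=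
    fun i hi => hL.comp (hr i hi)
  have hnum : ∀ i ∈ F, Tendsto (fun m => (l m 0 - l m i) ^ 2) atTop (nhds 1) := by
    intro i hi
    have := (htop.sub (hli i hi)).pow 2
    simpa using this
  have hden : ∀ i ∈ F, Tendsto (fun m => f (l m i / l m 0) * l m 0) atTop (nhds L) := by
    intro i hi
    have := (hfr i hi).mul htop
    simpa using this
  have hdpos : ∀ m (i : Fin (n + 2)), 0 < f (l m i / l m 0) * l m 0 := fun m i =>
    mul_pos (hfpos _ (div_pos (hpos m i) (hl0pos m))) (hl0pos m)
  constructor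
  · intro hLne u v
    have hc : ∀ i ∈ F, Tendsto (fun m => (l m 0 - l m i) ^ 2 / (f (l m i / l m 0) * l m 0))
        atTop (nhds (1 / L)) := fun i hi => (hnum i hi).div (hden i hi) hLne
    have h1 : Tendsto (fun m => (2:ℝ) * (∑ i ∈ F,
        (((l m 0 - l m i) ^ 2 / (f (l m i / l m 0) * l m 0) : ℝ) : ℂ) *
          (u i * (starRingEnd ℂ) (v i))).re) atTop
        (nhds ((2:ℝ) * (∑ i ∈ F, (((1 / L : ℝ)) : ℂ) * (u i * (starRingEnd ℂ) (v i))).re)) := by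
      apply Tendsto.const_mul
      apply (Complex.continuous_re.tendsto _).comp
      apply tendsto_finset_sum
      intro i hi
      exact ((Complex.continuous_ofReal.tendsto _).comp (hc i hi)).mul_const _
    have heq : (2:ℝ) * (∑ i ∈ F, (((1 / L : ℝ)) : ℂ) * (u i * (starRingEnd ℂ) (v i))).re
        = (2 / L) * (∑ i ∈ F, u i * (starRingEnd ℂ) (v i)).re := by
      rw [← Finset.mul_sum, Complex.re_ofReal_mul]
      ring
    rw [heq] at h1
    simpa only [liftedMetric, hF] using h1
  · intro hL0
    refine ⟨fun _ => 1, ?_, ?_⟩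
    · intro h
      have := congrFun h 0
      simp at this
    · have key : ∀ i ∈ F, Tendsto
          (fun m => (l m 0 - l m i) ^ 2 / (f (l m i / l m 0) * l m 0)) atTop atTop := by
        intro i hi
        have hd0 : Tendsto (fun m => f (l m i / l m 0) * l m 0) atTop
            (nhdsWithin 0 (Set.Ioi 0)) := by
          apply tendsto_nhdsWithin_of_tendsto_nhds_of_eventually_within
          · have := hden i hi
            rw [hL0] at this
            exact this
          · exact Eventually.of_forall fun m => hdpos m i
        have hinv : Tendsto (fun m => (f (l m i / l m 0) * l m 0)⁻¹) atTop atTop :=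
          tendsto_inv_nhdsGT_zero.comp hd0
        have := Tendsto.pos_mul_atTop one_pos (hnum i hi) hinv
        simpa [div_eq_mul_inv] using this
      have hone : (1 : Fin (n + 2)) ∈ F :=
        Finset.mem_filter.mpr ⟨Finset.mem_univ _, one_ne_zero⟩
      have hsumTop : Tendsto
          (fun m => ∑ i ∈ F, (l m 0 - l m i) ^ 2 / (f (l m i / l m 0) * l m 0))
          atTop atTop := by
        apply tendsto_atTop_mono _ (key 1 hone)
        intro m
        exact Finset.single_le_sum
          (f := fun j => (l m 0 - l m j) ^ 2 / (f (l m j / l m 0) * l m 0))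
          (fun j _ => div_nonneg (sq_nonneg _) (hdpos m j).le) hone
      have hfinal : Tendsto
          (fun m => 2 * ∑ i ∈ F, (l m 0 - l m i) ^ 2 / (f (l m i / l m 0) * l m 0))
          atTop atTop := by
        exact hsumTop.const_mul_atTop two_pos
      have hval : ∀ m, liftedMetric n f (l m) (fun _ => 1) (fun _ => 1)
          = 2 * ∑ i ∈ F, (l m 0 - l m i) ^ 2 / (f (l m i / l m 0) * l m 0) := by
        intro m
        simp only [liftedMetric, hF, map_one, mul_one, Complex.re_sum, Complex.ofReal_re]
      simpa only [hval] using hfinal
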